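/- For every positive integer n and b > 0, lim_{s→n} [csc(π s) H_{1/2 - s}(2√b) + 2 csc(2π s) J_{s - 1/2}(2√b)] = (1/π)·[J'_{n-1/2}(2√b) − (−1)^n H'_{1/2 − n}(2√b)], where the derivatives of the Bessel function J and the Struve function H are with respect to the order, and the limit is along s ∉ ℤ ∪ (1/2 + ℤ). -/

import Mathlib

open MeasureTheory Real Set Filter

/-- Bessel function of the first kind of order `α`. -/
noncomputable def besselJ (α z : ℝ) : ℝ :=
  ∑' n : ℕ, (-1) ^ n / ((n.factorial : ℝ) * Real.Gamma ((n : ℝ) + α + 1)) *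
    (z / 2) ^ (2 * (n : ℝ) + α)

/-- Struve function of order `α`. -/
noncomputable def struveH (α z : ℝ) : ℝ :=
  ∑' n : ℕ, (-1) ^ n / (Real.Gamma ((n : ℝ) + 3 / 2) * Real.Gamma ((n : ℝ) + α + 3 / 2)) *
    (z / 2) ^ (2 * (n : ℝ) + α + 1)

open scoped Topology

namespace BesselStruveAux

/-- reciprocal Gamma -/
noncomputable def R (x : ℝ) : ℝ := (Real.Gamma x)⁻¹

/-- derivative of reciprocal Gamma -/
noncomputable def R' (x : ℝ) : ℝ := (deriv (fun z : ℂ => (Complex.Gamma z)⁻¹) (x : ℂ)).re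

lemma hasDerivAt_R (x : ℝ) : HasDerivAt R (R' x) x := by
  have h : HasDerivAt (fun z : ℂ => (Complex.Gamma z)⁻¹)
      (deriv (fun z : ℂ => (Complex.Gamma z)⁻¹) (x : ℂ)) (x : ℂ) :=
    (Complex.differentiable_one_div_Gamma (x : ℂ)).hasDerivAt
  have h2 := h.real_of_complex
  have hfe : (fun y : ℝ => ((fun z : ℂ => (Complex.Gamma z)⁻¹) (y : ℂ)).re) = R := by
    funext y
    simp [R, Complex.Gamma_ofReal, ← Complex.ofReal_inv]
  rwa [hfe] at h2

lemma continuous_R' : Continuous R' := by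
  have hd : Differentiable ℂ fun z : ℂ => (Complex.Gamma z)⁻¹ :=
    Complex.differentiable_one_div_Gamma
  have ha : AnalyticOnNhd ℂ (fun z : ℂ => (Complex.Gamma z)⁻¹) Set.univ :=
    hd.differentiableOn.analyticOnNhd isOpen_univ
  have hd2 : Differentiable ℂ (deriv fun z : ℂ => (Complex.Gamma z)⁻¹) := fun z =>
    (ha.deriv z (mem_univ z)).differentiableAt
  exact Complex.continuous_re.comp (hd2.continuous.comp Complex.continuous_ofReal)

lemma continuous_R : Continuous R :=
  Differentiable.continuous fun x => (hasDerivAt_R x).differentiableAt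

lemma R_add_one {x : ℝ} (hx : x ≠ 0) : R (x + 1) = R x / x := by
  rw [R, R, Real.Gamma_add_one hx, mul_inv, div_eq_mul_inv, mul_comm]

lemma R'_add_one {x : ℝ} (hx : 0 < x) : R' (x + 1) = R' x / x - R x / x ^ 2 := by
  have h1 : HasDerivAt (fun y : ℝ => R (y + 1)) (R' (x + 1)) x := by
    have h := (hasDerivAt_R (x + 1)).comp x ((hasDerivAt_id x).add_const 1)
    simp at h
    exact h
  have h2 : HasDerivAt (fun y : ℝ => R y / y) ((R' x * x - R x * 1) / x ^ 2) x :=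
    (hasDerivAt_R x).div (hasDerivAt_id x) hx.ne'
  have h3 : HasDerivAt (fun y : ℝ => R (y + 1)) ((R' x * x - R x * 1) / x ^ 2) x := by
    apply h2.congr_of_eventuallyEq
    filter_upwards [eventually_ne_nhds hx.ne'] with y hy
    rw [R_add_one hy]
  have h4 := h1.unique h3
  rw [h4]
  field_simp


noncomputable def Phi (c t α : ℝ) : ℝ := c ^ α * R (α + t)
noncomputable def Dx (c t α : ℝ) : ℝ := Real.log c * c ^ α * R (α + t) + c ^ α * R' (α + t)

lemma hasDerivAt_crpow {c : ℝ} (hc : 0 < c) (α : ℝ) :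
    HasDerivAt (fun x : ℝ => c ^ x) (c ^ α * Real.log c) α :=
  (Real.hasStrictDerivAt_const_rpow hc α).hasDerivAt

lemma hasDerivAt_Phi {c : ℝ} (hc : 0 < c) (t α : ℝ) :
    HasDerivAt (Phi c t) (Dx c t α) α := by
  have h2 : HasDerivAt (fun x : ℝ => R (x + t)) (R' (α + t)) α := by
    have h := (hasDerivAt_R (α + t)).comp α ((hasDerivAt_id α).add_const t)
    simp at h
    exact h
  have h := (hasDerivAt_crpow hc α).mul h2
  rw [show Dx c t α = c ^ α * Real.log c * R (α + t) + c ^ α * R' (α + t) by unfold Dx; ring]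
  exact h

lemma continuous_Phi {c : ℝ} (hc : 0 < c) (t : ℝ) : Continuous (Phi c t) :=
  Differentiable.continuous fun α => (hasDerivAt_Phi hc t α).differentiableAt

lemma continuous_Dx {c : ℝ} (hc : 0 < c) (t : ℝ) : Continuous (Dx c t) := by
  have hcr : Continuous fun x : ℝ => c ^ x :=
    Differentiable.continuous fun α => (hasDerivAt_crpow hc α).differentiableAt
  exact ((continuous_const.mul hcr).mul
      (continuous_R.comp (continuous_id.add continuous_const))).add
    (hcr.mul (continuous_R'.comp (continuous_id.add continuous_const)))

lemma Phi_add_one {c t α : ℝ} (hx : α + t ≠ 0) :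
    Phi c (t + 1) α = Phi c t α / (α + t) := by
  unfold Phi
  rw [show α + (t + 1) = (α + t) + 1 by ring, R_add_one hx]
  ring

lemma Dx_add_one {c t α : ℝ} (hx : 0 < α + t) :
    Dx c (t + 1) α = Dx c t α / (α + t) - Phi c t α / (α + t) ^ 2 := by
  unfold Dx Phi
  rw [show α + (t + 1) = (α + t) + 1 by ring, R_add_one hx.ne', R'_add_one hx]
  field_simp
  ring

lemma key {c : ℝ} (hc : 0 < c) {t α : ℝ} (h2 : (2 : ℝ) ≤ α + t) (j : ℕ) :
    |Phi c (t + j) α| ≤ |Phi c t α| / j.factorial ∧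
      |Dx c (t + j) α| ≤ |Dx c t α| + 2 * |Phi c t α| := by
  induction j with
  | zero => simp
  | succ j ih =>
    have hj0 : (0 : ℝ) ≤ j := Nat.cast_nonneg j
    have hx2 : (2 : ℝ) ≤ α + (t + j) := by linarith
    have hx0 : (0 : ℝ) < α + (t + j) := by linarith
    have hxj : ((j : ℝ) + 1) ≤ α + (t + j) := by linarith
    have e1 : t + ((j : ℕ) + 1 : ℕ) = (t + j) + 1 := by push_cast; ring
    have hA0 : (0 : ℝ) ≤ |Phi c t α| := abs_nonneg _
    have hB0 : (0 : ℝ) ≤ |Dx c t α| := abs_nonneg _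
    have hfac : (0 : ℝ) < j.factorial := by positivity
    obtain ⟨ih1, ih2⟩ := ih
    have hPle : |Phi c (t + (j:ℝ)) α| ≤ |Phi c t α| :=
      ih1.trans (div_le_self hA0 (by exact_mod_cast Nat.one_le_iff_ne_zero.mpr j.factorial_ne_zero))
    constructor
    · rw [e1, Phi_add_one hx0.ne', abs_div, abs_of_pos hx0]
      calc |Phi c (t + (j:ℝ)) α| / (α + (t + (j:ℝ)))
          ≤ (|Phi c t α| / j.factorial) / (α + (t + (j:ℝ))) := by gcongr
        _ = |Phi c t α| / ((j.factorial : ℝ) * (α + (t + (j:ℝ)))) := by rw [div_div]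
        _ ≤ |Phi c t α| / ((j.factorial : ℝ) * ((j:ℝ) + 1)) := by
            gcongr
        _ = |Phi c t α| / ((j+1).factorial : ℝ) := by
            rw [Nat.factorial_succ]; push_cast; ring_nf
    · rw [e1, Dx_add_one hx0]
      have hx2sq : (4:ℝ) ≤ (α + (t + (j:ℝ))) ^ 2 := by nlinarith
      have habs : |Dx c (t + (j:ℝ)) α / (α + (t + (j:ℝ))) -
            Phi c (t + (j:ℝ)) α / (α + (t + (j:ℝ))) ^ 2| ≤
          |Dx c (t + (j:ℝ)) α| / (α + (t + (j:ℝ))) +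
            |Phi c (t + (j:ℝ)) α| / (α + (t + (j:ℝ))) ^ 2 := by
        refine (abs_sub _ _).trans ?_
        rw [abs_div, abs_div, abs_of_pos hx0, abs_of_pos (by positivity : (0:ℝ) < (α + (t + (j:ℝ))) ^ 2)]
      refine habs.trans ?_
      have hb1 : |Dx c (t + (j:ℝ)) α| / (α + (t + (j:ℝ))) ≤ (|Dx c t α| + 2 * |Phi c t α|) / 2 := by
        gcongr
      have hb2 : |Phi c (t + (j:ℝ)) α| / (α + (t + (j:ℝ))) ^ 2 ≤ |Phi c t α| / 4 := by
        gcongr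
      linarith


lemma core_bound {c : ℝ} (hc : 0 < c) (σ α₀ : ℝ) :
    ∃ K : ℕ, ∃ Cb : ℝ, 0 ≤ Cb ∧ ∀ α ∈ Set.Icc (α₀ - 1) (α₀ + 1), ∀ k : ℕ, K ≤ k →
      |Phi c ((k : ℝ) + σ) α| ≤ Cb / ((k - K).factorial : ℝ) ∧ |Dx c ((k : ℝ) + σ) α| ≤ Cb := by
  set K : ℕ := ⌈3 - σ - α₀⌉₊ with hK
  have hKge : (3 : ℝ) - σ - α₀ ≤ K := Nat.le_ceil _
  set t : ℝ := (K : ℝ) + σ with ht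
  obtain ⟨A, hA⟩ := isCompact_Icc.exists_bound_of_continuousOn
    (continuous_Phi hc t).continuousOn (s := Set.Icc (α₀ - 1) (α₀ + 1))
  obtain ⟨B, hB⟩ := isCompact_Icc.exists_bound_of_continuousOn
    (continuous_Dx hc t).continuousOn (s := Set.Icc (α₀ - 1) (α₀ + 1))
  refine ⟨K, 3 * |A| + |B|, by positivity, fun α hα k hk => ?_⟩
  have h2 : (2 : ℝ) ≤ α + t := by
    have := hα.1
    rw [ht]; linarith
  have harg : (k : ℝ) + σ = t + ((k - K : ℕ) : ℝ) := by
    rw [Nat.cast_sub hk, ht]; ring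
  obtain ⟨h1, h2'⟩ := key hc h2 (k - K)
  rw [harg]
  have hPA : |Phi c t α| ≤ |A| := by
    have := hA α hα; rw [Real.norm_eq_abs] at this; exact this.trans (le_abs_self A)
  have hDB : |Dx c t α| ≤ |B| := by
    have := hB α hα; rw [Real.norm_eq_abs] at this; exact this.trans (le_abs_self B)
  have hA0 : (0:ℝ) ≤ |A| := abs_nonneg _
  have hB0 : (0:ℝ) ≤ |B| := abs_nonneg _
  have hfacpos : (0:ℝ) < ((k - K).factorial : ℝ) := by positivity
  constructor
  · refine h1.trans ?_
    rw [div_le_div_iff_of_pos_right hfacpos]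
    linarith
  · refine h2'.trans (by linarith)

lemma core_tail_summable {c : ℝ} (hc : 0 < c) (σ : ℝ) {e : ℕ → ℝ}
    (he : Summable fun k => |e k|) (α : ℝ) :
    Summable fun k => e k * Phi c ((k : ℝ) + σ) α := by
  obtain ⟨K, Cb, hCb0, hbound⟩ := core_bound hc σ α
  have hα : α ∈ Set.Icc (α - 1) (α + 1) := ⟨by linarith, by linarith⟩
  rw [← summable_nat_add_iff K]
  have hmaj : Summable fun j : ℕ => |e (j + K)| * Cb :=
    ((summable_nat_add_iff K).mpr he).mul_right Cb
  refine hmaj.of_norm_bounded fun j => ?_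
  rw [Real.norm_eq_abs, abs_mul]
  have hb := (hbound α hα (j + K) (Nat.le_add_left _ _)).1
  have hfac : (1 : ℝ) ≤ ((j + K - K).factorial : ℝ) := by
    exact_mod_cast Nat.one_le_iff_ne_zero.mpr (Nat.factorial_ne_zero _)
  have : |Phi c (((j + K : ℕ) : ℝ) + σ) α| ≤ Cb := by
    refine hb.trans ?_
    calc Cb / ((j + K - K).factorial : ℝ) ≤ Cb / 1 := by gcongr
      _ = Cb := div_one Cb
  exact mul_le_mul_of_nonneg_left this (abs_nonneg _)

lemma core_dx_summable {c : ℝ} (hc : 0 < c) (σ : ℝ) {e : ℕ → ℝ}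
    (he : Summable fun k => |e k|) (α : ℝ) :
    Summable fun k => e k * Dx c ((k : ℝ) + σ) α := by
  obtain ⟨K, Cb, hCb0, hbound⟩ := core_bound hc σ α
  have hα : α ∈ Set.Icc (α - 1) (α + 1) := ⟨by linarith, by linarith⟩
  rw [← summable_nat_add_iff K]
  have hmaj : Summable fun j : ℕ => |e (j + K)| * Cb :=
    ((summable_nat_add_iff K).mpr he).mul_right Cb
  refine hmaj.of_norm_bounded fun j => ?_
  rw [Real.norm_eq_abs, abs_mul]
  exact mul_le_mul_of_nonneg_left
    (hbound α hα (j + K) (Nat.le_add_left _ _)).2 (abs_nonneg _)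

set_option maxHeartbeats 1000000 in
lemma core_hasDerivAt {c : ℝ} (hc : 0 < c) (σ : ℝ) {e : ℕ → ℝ}
    (he : Summable fun k => |e k|) (α₀ : ℝ) :
    HasDerivAt (fun α => ∑' k : ℕ, e k * Phi c ((k : ℝ) + σ) α)
      (∑' k : ℕ, e k * Dx c ((k : ℝ) + σ) α₀) α₀ := by
  obtain ⟨K, Cb, hCb0, hbound⟩ := core_bound hc σ α₀
  set T : Set ℝ := Set.Ioo (α₀ - 1) (α₀ + 1) with hT
  have hTsub : T ⊆ Set.Icc (α₀ - 1) (α₀ + 1) := Set.Ioo_subset_Icc_self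
  have hα₀T : α₀ ∈ T := ⟨by linarith, by linarith⟩
  -- tail
  have htail : HasDerivAt (fun α => ∑' j : ℕ, e (j + K) * Phi c (((j + K : ℕ) : ℝ) + σ) α)
      (∑' j : ℕ, e (j + K) * Dx c (((j + K : ℕ) : ℝ) + σ) α₀) α₀ := by
    refine hasDerivAt_tsum_of_isPreconnected
      (u := fun j => |e (j + K)| * Cb)
      (g := fun j α => e (j + K) * Phi c (((j + K : ℕ) : ℝ) + σ) α)
      (g' := fun j α => e (j + K) * Dx c (((j + K : ℕ) : ℝ) + σ) α)
      (((summable_nat_add_iff K).mpr he).mul_right Cb) isOpen_Ioo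
      (convex_Ioo _ _).isPreconnected
      (fun j y _ => (hasDerivAt_Phi hc _ y).const_mul (e (j + K)))
      (fun j y hy => ?_) hα₀T ?_ hα₀T
    · rw [Real.norm_eq_abs, abs_mul]
      exact mul_le_mul_of_nonneg_left
        (hbound y (hTsub hy) (j + K) (Nat.le_add_left _ _)).2 (abs_nonneg _)
    · exact (summable_nat_add_iff K).mpr (core_tail_summable hc σ he α₀)
  -- finite part
  have hfin : HasDerivAt (fun α => ∑ k ∈ Finset.range K, e k * Phi c ((k : ℝ) + σ) α)
      (∑ k ∈ Finset.range K, e k * Dx c ((k : ℝ) + σ) α₀) α₀ :=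
    HasDerivAt.fun_sum fun k _ => (hasDerivAt_Phi hc _ α₀).const_mul (e k)
  have hsum := hfin.add htail
  have hfull : (fun α => (∑ k ∈ Finset.range K, e k * Phi c ((k : ℝ) + σ) α) +
      ∑' j : ℕ, e (j + K) * Phi c (((j + K : ℕ) : ℝ) + σ) α) =
      fun α => ∑' k : ℕ, e k * Phi c ((k : ℝ) + σ) α := by
    funext α
    exact Summable.sum_add_tsum_nat_add K (core_tail_summable hc σ he α)
  simp only [Pi.add_def] at hsum
  rw [hfull] at hsum
  have hval : (∑ k ∈ Finset.range K, e k * Dx c ((k : ℝ) + σ) α₀) +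
      ∑' j : ℕ, e (j + K) * Dx c (((j + K : ℕ) : ℝ) + σ) α₀ =
      ∑' k : ℕ, e k * Dx c ((k : ℝ) + σ) α₀ :=
    Summable.sum_add_tsum_nat_add K (core_dx_summable hc σ he α₀)
  rwa [hval] at hsum


noncomputable def eJ (z : ℝ) (k : ℕ) : ℝ := (-1) ^ k / (k.factorial : ℝ) * (z / 2) ^ (2 * (k : ℝ))
noncomputable def eS (z : ℝ) (k : ℕ) : ℝ := (-1) ^ k * R ((k : ℝ) + 3 / 2) * (z / 2) ^ (2 * (k : ℝ) + 1)

lemma besselJ_term_eq {z : ℝ} (hz : 0 < z) (α : ℝ) (k : ℕ) :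
    (-1) ^ k / ((k.factorial : ℝ) * Real.Gamma ((k : ℝ) + α + 1)) * (z / 2) ^ (2 * (k : ℝ) + α)
      = eJ z k * Phi (z / 2) ((k : ℝ) + 1) α := by
  have hc : (0 : ℝ) < z / 2 := by linarith
  rw [Real.rpow_add hc]
  unfold eJ Phi R
  rw [show α + ((k : ℝ) + 1) = (k : ℝ) + α + 1 by ring]
  ring

lemma struveH_term_eq {z : ℝ} (hz : 0 < z) (α : ℝ) (k : ℕ) :
    (-1) ^ k / (Real.Gamma ((k : ℝ) + 3 / 2) * Real.Gamma ((k : ℝ) + α + 3 / 2)) *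
        (z / 2) ^ (2 * (k : ℝ) + α + 1)
      = eS z k * Phi (z / 2) ((k : ℝ) + 3 / 2) α := by
  have hc : (0 : ℝ) < z / 2 := by linarith
  rw [show 2 * (k : ℝ) + α + 1 = (2 * (k : ℝ) + 1) + α by ring, Real.rpow_add hc]
  unfold eS Phi R
  rw [show α + ((k : ℝ) + 3 / 2) = (k : ℝ) + α + 3 / 2 by ring]
  ring

lemma besselJ_eq {z : ℝ} (hz : 0 < z) (α : ℝ) :
    besselJ α z = ∑' k : ℕ, eJ z k * Phi (z / 2) ((k : ℝ) + 1) α :=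
  tsum_congr fun k => besselJ_term_eq hz α k

lemma struveH_eq {z : ℝ} (hz : 0 < z) (α : ℝ) :
    struveH α z = ∑' k : ℕ, eS z k * Phi (z / 2) ((k : ℝ) + 3 / 2) α :=
  tsum_congr fun k => struveH_term_eq hz α k

lemma summable_abs_eJ {z : ℝ} (hz : 0 < z) : Summable fun k => |eJ z k| := by
  have hc : (0 : ℝ) < z / 2 := by linarith
  refine (Real.summable_pow_div_factorial ((z / 2) ^ 2)).congr fun k => ?_
  unfold eJ
  rw [abs_mul, abs_div, abs_pow, abs_neg, abs_one, one_pow,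
    abs_of_nonneg (Nat.cast_nonneg _), abs_of_pos (Real.rpow_pos_of_pos hc _),
    show (2 * (k : ℝ)) = ((2 * k : ℕ) : ℝ) by push_cast; ring, Real.rpow_natCast, pow_mul]
  ring

lemma summable_abs_eS {z : ℝ} (hz : 0 < z) : Summable fun k => |eS z k| := by
  have hc : (0 : ℝ) < z / 2 := by linarith
  rw [← summable_nat_add_iff 1]
  have hkey : ∀ j : ℕ, |R ((5 : ℝ) / 2 + j)| ≤ |R (5 / 2)| / j.factorial := by
    intro j
    have h := (key (c := 1) one_pos (t := (5 : ℝ) / 2) (α := 0) (by norm_num) j).1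
    simpa [Phi, Real.one_rpow] using h
  have hmaj : Summable fun j : ℕ => (|R (5 / 2)| * (z / 2) ^ 3) * (((z / 2) ^ 2) ^ j / j.factorial) :=
    (Real.summable_pow_div_factorial ((z / 2) ^ 2)).mul_left _
  refine Summable.of_nonneg_of_le (fun j => abs_nonneg _) (fun j => ?_) hmaj
  have hE : |eS z (j + 1)| = |R ((5 : ℝ) / 2 + j)| * ((z / 2) ^ 3 * ((z / 2) ^ 2) ^ j) := by
    unfold eS
    rw [abs_mul, abs_mul, abs_pow, abs_neg, abs_one, one_pow, one_mul,
      abs_of_pos (Real.rpow_pos_of_pos hc _),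
      show ((j + 1 : ℕ) : ℝ) + 3 / 2 = (5 : ℝ) / 2 + j by push_cast; ring,
      show (2 * ((j + 1 : ℕ) : ℝ) + 1) = ((2 * j + 3 : ℕ) : ℝ) by push_cast; ring,
      Real.rpow_natCast]
    congr 1
    rw [pow_add, pow_mul]
    ring
  rw [hE]
  have h1 := hkey j
  have h2 : (0 : ℝ) < (z / 2) ^ 3 * ((z / 2) ^ 2) ^ j := by positivity
  calc |R ((5 : ℝ) / 2 + j)| * ((z / 2) ^ 3 * ((z / 2) ^ 2) ^ j)
      ≤ (|R (5 / 2)| / j.factorial) * ((z / 2) ^ 3 * ((z / 2) ^ 2) ^ j) :=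
        mul_le_mul_of_nonneg_right h1 h2.le
    _ = (|R (5 / 2)| * (z / 2) ^ 3) * (((z / 2) ^ 2) ^ j / j.factorial) := by ring

lemma differentiableAt_besselJ {z : ℝ} (hz : 0 < z) (α₀ : ℝ) :
    DifferentiableAt ℝ (fun α => besselJ α z) α₀ := by
  have h := core_hasDerivAt (by linarith : (0:ℝ) < z / 2) 1 (summable_abs_eJ hz) α₀
  have he : (fun α => besselJ α z) = fun α => ∑' k : ℕ, eJ z k * Phi (z / 2) ((k : ℝ) + 1) α :=
    funext fun α => besselJ_eq hz α
  rw [he]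
  exact h.differentiableAt

lemma differentiableAt_struveH {z : ℝ} (hz : 0 < z) (α₀ : ℝ) :
    DifferentiableAt ℝ (fun α => struveH α z) α₀ := by
  have h := core_hasDerivAt (by linarith : (0:ℝ) < z / 2) (3 / 2) (summable_abs_eS hz) α₀
  have he : (fun α => struveH α z) = fun α => ∑' k : ℕ, eS z k * Phi (z / 2) ((k : ℝ) + 3 / 2) α :=
    funext fun α => struveH_eq hz α
  rw [he]
  exact h.differentiableAt

lemma summable_struve_terms {z : ℝ} (hz : 0 < z) (α : ℝ) :
    Summable fun k : ℕ => (-1) ^ k / (Real.Gamma ((k : ℝ) + 3 / 2) *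
      Real.Gamma ((k : ℝ) + α + 3 / 2)) * (z / 2) ^ (2 * (k : ℝ) + α + 1) :=
  (core_tail_summable (by linarith : (0:ℝ) < z / 2) (3 / 2) (summable_abs_eS hz) α).congr
    fun k => (struveH_term_eq hz α k).symm


lemma Gn_zero (n : ℕ) (hn : 1 ≤ n) {z : ℝ} (hz : 0 < z) :
    (-1 : ℝ) ^ n * struveH (1 / 2 - (n : ℝ)) z + besselJ ((n : ℝ) - 1 / 2) z = 0 := by
  obtain ⟨m, rfl⟩ : ∃ m, n = m + 1 := ⟨n - 1, (Nat.succ_pred_eq_of_pos hn).symm⟩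
  set α : ℝ := 1 / 2 - ((m + 1 : ℕ) : ℝ) with hα
  set f : ℕ → ℝ := fun k => (-1) ^ k / (Real.Gamma ((k : ℝ) + 3 / 2) *
      Real.Gamma ((k : ℝ) + α + 3 / 2)) * (z / 2) ^ (2 * (k : ℝ) + α + 1) with hf
  have hsum : Summable f := summable_struve_terms hz α
  have hzero : ∀ k ∈ Finset.range m, f k = 0 := by
    intro k hk
    rw [Finset.mem_range] at hk
    have hcast : (k : ℝ) + α + 3 / 2 = -((m - (k + 1) : ℕ) : ℝ) := by
      rw [Nat.cast_sub (by omega), hα]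
      push_cast
      ring
    rw [hf]
    simp only
    rw [hcast, Real.Gamma_neg_nat_eq_zero, mul_zero, div_zero, zero_mul]
  have hsplit := Summable.sum_add_tsum_nat_add m hsum
  have hfirst : ∑ k ∈ Finset.range m, f k = 0 := Finset.sum_eq_zero hzero
  have hshift : ∀ j : ℕ, f (j + m) = (-1 : ℝ) ^ m *
      ((-1) ^ j / ((j.factorial : ℝ) * Real.Gamma ((j : ℝ) + (((m + 1 : ℕ) : ℝ) - 1 / 2) + 1)) *
        (z / 2) ^ (2 * (j : ℝ) + (((m + 1 : ℕ) : ℝ) - 1 / 2))) := by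
    intro j
    rw [hf]
    simp only
    rw [show ((j + m : ℕ) : ℝ) = (j : ℝ) + m by push_cast; ring]
    rw [show ((j : ℝ) + (m : ℝ)) + α + 3 / 2 = (j : ℝ) + 1 by rw [hα]; push_cast; ring]
    rw [Real.Gamma_nat_eq_factorial j]
    rw [show ((j : ℝ) + (m : ℝ)) + 3 / 2 = (j : ℝ) + (((m + 1 : ℕ) : ℝ) - 1 / 2) + 1 by
      push_cast; ring]
    rw [show 2 * ((j : ℝ) + (m : ℝ)) + α + 1 = 2 * (j : ℝ) + (((m + 1 : ℕ) : ℝ) - 1 / 2) by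
      rw [hα]; push_cast; ring]
    rw [pow_add]
    ring
  have htail : ∑' j : ℕ, f (j + m) = (-1 : ℝ) ^ m * besselJ (((m + 1 : ℕ) : ℝ) - 1 / 2) z := by
    rw [besselJ, ← tsum_mul_left]
    exact tsum_congr hshift
  have hH : struveH α z = (-1 : ℝ) ^ m * besselJ (((m + 1 : ℕ) : ℝ) - 1 / 2) z := by
    rw [struveH, ← hsplit, hfirst, zero_add, htail]
  rw [hα] at hH
  rw [hH]
  have : (-1 : ℝ) ^ (m + 1) * (-1 : ℝ) ^ m = -1 := by
    rw [← pow_add]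
    have : (-1 : ℝ) ^ (m + 1 + m) = (-1 : ℝ) ^ (2 * m + 1) := by ring_nf
    rw [this, pow_succ, pow_mul]
    norm_num
  rw [← mul_assoc, this]
  ring


end BesselStruveAux

theorem tendsto_csc_struve_bessel (n : ℕ) (hn : 1 ≤ n) (b : ℝ) (hb : 0 < b) :
    Filter.Tendsto
      (fun s : ℝ =>
        (1 / Real.sin (Real.pi * s)) * struveH (1 / 2 - s) (2 * Real.sqrt b)
          + 2 * (1 / Real.sin (2 * Real.pi * s)) * besselJ (s - 1 / 2) (2 * Real.sqrt b))
      (nhdsWithin (n : ℝ)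
        {s : ℝ | (∀ k : ℤ, s ≠ (k : ℝ)) ∧ (∀ k : ℤ, s ≠ 1 / 2 + (k : ℝ))})
      (nhds ((1 / Real.pi) *
        (deriv (fun α => besselJ α (2 * Real.sqrt b)) ((n : ℝ) - 1 / 2)
          - (-1 : ℝ) ^ n * deriv (fun α => struveH α (2 * Real.sqrt b)) (1 / 2 - (n : ℝ))))) := by
  have hsb : 0 < Real.sqrt b := Real.sqrt_pos.mpr hb
  set z : ℝ := 2 * Real.sqrt b with hzdef
  have hz : (0 : ℝ) < z := by rw [hzdef]; linarith
  set c1 : ℝ := (-1 : ℝ) ^ n with hc1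
  set J' : ℝ := deriv (fun α => besselJ α z) ((n : ℝ) - 1 / 2) with hJ'
  set H' : ℝ := deriv (fun α => struveH α z) (1 / 2 - (n : ℝ)) with hH'
  set l := nhdsWithin ((n : ℕ) : ℝ)
    {s : ℝ | (∀ k : ℤ, s ≠ (k : ℝ)) ∧ (∀ k : ℤ, s ≠ 1 / 2 + (k : ℝ))} with hl
  have hJd := BesselStruveAux.differentiableAt_besselJ hz ((n : ℝ) - 1 / 2)
  have hHd := BesselStruveAux.differentiableAt_struveH hz (1 / 2 - (n : ℝ))
  have hJ : HasDerivAt (fun s : ℝ => besselJ (s - 1 / 2) z) J' (n : ℝ) := by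
    have h1 := (hJd.hasDerivAt).comp (n : ℝ) ((hasDerivAt_id (n : ℝ)).sub_const (1 / 2))
    have h2 : HasDerivAt (fun s : ℝ => besselJ (s - 1 / 2) z)
        (deriv (fun α => besselJ α z) ((n : ℝ) - 1 / 2) * 1) (n : ℝ) := h1
    rw [hJ']
    rwa [mul_one] at h2
  have hH : HasDerivAt (fun s : ℝ => struveH (1 / 2 - s) z) (-H') (n : ℝ) := by
    have h1 := (hHd.hasDerivAt).comp (n : ℝ) ((hasDerivAt_id (n : ℝ)).const_sub (1 / 2))
    have h2 : HasDerivAt (fun s : ℝ => struveH (1 / 2 - s) z)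
        (deriv (fun α => struveH α z) (1 / 2 - (n : ℝ)) * -1) (n : ℝ) := h1
    rw [hH']
    rwa [mul_neg_one] at h2
  set G : ℝ → ℝ := fun s => c1 * struveH (1 / 2 - s) z + besselJ (s - 1 / 2) z with hG
  have hGd : HasDerivAt G (c1 * (-H') + J') (n : ℝ) := (hH.const_mul c1).add hJ
  have hG0 : G (n : ℝ) = 0 := by
    simp only [hG, hc1]
    exact BesselStruveAux.Gn_zero n hn hz
  have hlne : l ≤ 𝓝[≠] (n : ℝ) := by
    rw [hl]
    apply nhdsWithin_mono
    intro s hs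
    simpa using hs.1 (n : ℤ)
  have hln : l ≤ 𝓝 (n : ℝ) := hlne.trans nhdsWithin_le_nhds
  have hcosπn : Real.cos (π * (n : ℝ)) = c1 := by
    rw [mul_comm, hc1]
    simpa using Real.cos_nat_mul_pi_sub 0 n
  have hsinπn : Real.sin (π * (n : ℝ)) = 0 := by rw [mul_comm]; exact Real.sin_nat_mul_pi n
  have hsin2πn : Real.sin (2 * π * (n : ℝ)) = 0 := by
    have h := Real.sin_nat_mul_pi (2 * n)
    push_cast at h
    rw [show 2 * π * (n : ℝ) = 2 * (n : ℝ) * π by ring]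
    exact h
  have hcos2πn : Real.cos (2 * π * (n : ℝ)) = 1 := by
    rw [show 2 * π * (n : ℝ) = (n : ℝ) * (2 * π) by ring]
    exact Real.cos_nat_mul_two_pi n
  have hm1 : c1 ≠ 0 := by rw [hc1]; exact pow_ne_zero _ (by norm_num)
  have d1 : HasDerivAt (fun s : ℝ => Real.cos (π * s)) 0 (n : ℝ) := by
    have h := (Real.hasDerivAt_cos (π * (n : ℝ))).comp (n : ℝ)
      ((hasDerivAt_id (n : ℝ)).const_mul π)
    simp [hsinπn] at h
    exact h
  have t1 : Tendsto (slope (fun s : ℝ => Real.cos (π * s)) (n : ℝ)) l (𝓝 0) :=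
    (hasDerivAt_iff_tendsto_slope.mp d1).mono_left hlne
  have d2 : HasDerivAt (fun s : ℝ => Real.sin (π * s)) (c1 * π) (n : ℝ) := by
    have h := (Real.hasDerivAt_sin (π * (n : ℝ))).comp (n : ℝ)
      ((hasDerivAt_id (n : ℝ)).const_mul π)
    simp [hcosπn] at h
    exact h
  have t2 : Tendsto (fun s : ℝ => (s - (n : ℝ)) * (Real.sin (π * s))⁻¹) l (𝓝 ((c1 * π)⁻¹)) := by
    have h := ((hasDerivAt_iff_tendsto_slope.mp d2).mono_left hlne).inv₀
      (mul_ne_zero hm1 Real.pi_ne_zero)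
    refine h.congr fun s => ?_
    rw [slope_def_field, hsinπn, sub_zero, inv_div, div_eq_mul_inv]
  have t3 : Tendsto (fun s : ℝ => (s - (n : ℝ)) * (Real.sin (2 * π * s))⁻¹) l
      (𝓝 ((2 * π)⁻¹)) := by
    have d3 : HasDerivAt (fun s : ℝ => Real.sin (2 * π * s)) (2 * π) (n : ℝ) := by
      have h := (Real.hasDerivAt_sin (2 * π * (n : ℝ))).comp (n : ℝ)
        ((hasDerivAt_id (n : ℝ)).const_mul (2 * π))
      simp [hcos2πn] at h
      exact h
    have h := ((hasDerivAt_iff_tendsto_slope.mp d3).mono_left hlne).inv₀ (by positivity)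
    refine h.congr fun s => ?_
    rw [slope_def_field, hsin2πn, sub_zero, inv_div, div_eq_mul_inv]
  have t4 : Tendsto (fun s : ℝ => (Real.cos (π * s))⁻¹) l (𝓝 (c1⁻¹)) := by
    have hc : Tendsto (fun s : ℝ => Real.cos (π * s)) (𝓝 (n : ℝ))
        (𝓝 (Real.cos (π * (n : ℝ)))) :=
      (Real.continuous_cos.comp (continuous_const.mul continuous_id)).continuousAt
    have h := (hc.mono_left hln).inv₀ (by rw [hcosπn]; exact hm1)
    rwa [hcosπn] at h
  have t5 : Tendsto (fun s : ℝ => struveH (1 / 2 - s) z) l (𝓝 (struveH (1 / 2 - (n : ℝ)) z)) :=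
    (hH.continuousAt.tendsto).mono_left hln
  have t6 : Tendsto (slope G (n : ℝ)) l (𝓝 (c1 * (-H') + J')) :=
    (hasDerivAt_iff_tendsto_slope.mp hGd).mono_left hlne
  have hEt : Tendsto (fun s : ℝ =>
      slope (fun s' : ℝ => Real.cos (π * s')) (n : ℝ) s *
          ((s - (n : ℝ)) * (Real.sin (π * s))⁻¹) *
        (Real.cos (π * s))⁻¹ * struveH (1 / 2 - s) z
      + 2 * slope G (n : ℝ) s * ((s - (n : ℝ)) * (Real.sin (2 * π * s))⁻¹)) l
      (𝓝 (0 * (c1 * π)⁻¹ * c1⁻¹ * struveH (1 / 2 - (n : ℝ)) z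
        + 2 * (c1 * (-H') + J') * (2 * π)⁻¹)) :=
    (((t1.mul t2).mul t4).mul t5).add ((tendsto_const_nhds.mul t6).mul t3)
  have hval : 0 * (c1 * π)⁻¹ * c1⁻¹ * struveH (1 / 2 - (n : ℝ)) z
      + 2 * (c1 * (-H') + J') * (2 * π)⁻¹
      = (1 / π) * (J' - c1 * H') := by
    field_simp
    ring
  rw [hval] at hEt
  refine hEt.congr' ?_
  rw [hl]
  filter_upwards [self_mem_nhdsWithin] with s hs
  obtain ⟨h1, h2⟩ := hs
  have hsn : s - (n : ℝ) ≠ 0 := sub_ne_zero.mpr (by simpa using h1 (n : ℤ))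
  have hsin : Real.sin (π * s) ≠ 0 := by
    rw [Real.sin_ne_zero_iff]
    intro k hk
    apply h1 k
    have h3 : π * (k : ℝ) = π * s := by rw [← hk]; ring
    exact (mul_left_cancel₀ Real.pi_ne_zero h3).symm
  have hcos : Real.cos (π * s) ≠ 0 := by
    rw [Real.cos_ne_zero_iff]
    intro k hk
    apply h2 k
    have h3 : π * s = π * (1 / 2 + (k : ℝ)) := by rw [hk]; ring
    exact mul_left_cancel₀ Real.pi_ne_zero h3
  have hsin2eq : Real.sin (2 * π * s) = 2 * Real.sin (π * s) * Real.cos (π * s) := by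
    rw [show 2 * π * s = 2 * (π * s) by ring, Real.sin_two_mul]
  simp only [slope_def_field, hG0, sub_zero, hcosπn]
  simp only [hG]
  rw [hsin2eq]
  field_simp
  ring
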